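/- Under weak substitutes, connected strict substitutes, the balance condition ∑_z Q_z(p) = c = ∑_z q_z, and a normalization map ψ that is strictly increasing along coordinatewise strict increases (p_z < p'_z for all z implies ψ(p) < ψ(p')), the system Q(p) = q together with ψ(p) = K has at most one solution p ∈ E. -/

import Mathlib

/-- Iterated cross-monotonicity: raising several coordinates (other than `x`) weakly
decreases `Q · x`, provided the own coordinate is unchanged. -/
lemma cross_mono_aux {Z : Type*} [Fintype Z] [DecidableEq Z]
    (L U : Z → ℝ) (E : Set (Z → ℝ))
    (hE : ∀ p : Z → ℝ, p ∈ E ↔ ∀ z, p z ∈ Set.Ioo (L z) (U z))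
    (Q : (Z → ℝ) → Z → ℝ)
    (hweak_cross : ∀ x y : Z, y ≠ x → ∀ p ∈ E, ∀ p' ∈ E,
      (∀ z, z ≠ y → p z = p' z) → p y ≤ p' y → Q p' x ≤ Q p x) :
    ∀ n : ℕ, ∀ p p' : Z → ℝ, p ∈ E → p' ∈ E → (∀ z, p z ≤ p' z) →
      (Finset.univ.filter (fun z => p z < p' z)).card ≤ n →
      ∀ x, p x = p' x → Q p' x ≤ Q p x := by
  intro n
  induction n with
  | zero =>
    intro p p' hp hp' hle hcard x hx
    have heq : p = p' := by
      funext z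
      rcases lt_or_eq_of_le (hle z) with h | h
      · exfalso
        have : z ∈ Finset.univ.filter (fun z => p z < p' z) := by
          simp [h]
        have := Finset.card_pos.mpr ⟨z, this⟩
        omega
      · exact h
    rw [heq]
  | succ n ih =>
    intro p p' hp hp' hle hcard x hx
    by_cases hD : (Finset.univ.filter (fun z => p z < p' z)).Nonempty
    · obtain ⟨y, hy⟩ := hD
      have hy' : p y < p' y := by simpa using hy
      have hyx : y ≠ x := by
        intro h; rw [h, hx] at hy'; exact lt_irrefl _ hy'
      set p'' := Function.update p y (p' y) with hp''def
      have hp'' : p'' ∈ E := by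
        rw [hE]
        intro z
        by_cases hz : z = y
        · subst hz; simpa [p''] using (hE p').mp hp' z
        · simpa [p'', Function.update_of_ne hz] using (hE p).mp hp z
      have h1 : Q p'' x ≤ Q p x := by
        refine hweak_cross x y hyx p hp p'' hp'' (fun z hz => ?_) ?_
        · simp [p'', Function.update_of_ne hz]
        · simp [p'', hle y]
      have hle2 : ∀ z, p'' z ≤ p' z := by
        intro z
        by_cases hz : z = y
        · subst hz; simp [p'']
        · simp [p'', Function.update_of_ne hz, hle z]
      have hcard2 : (Finset.univ.filter (fun z => p'' z < p' z)).card ≤ n := by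
        have hsub : (Finset.univ.filter (fun z => p'' z < p' z)) ⊆
            (Finset.univ.filter (fun z => p z < p' z)).erase y := by
          intro z hz
          simp only [Finset.mem_filter, Finset.mem_univ, true_and] at hz
          have hzy : z ≠ y := by
            intro h; subst h; simp [p''] at hz
          refine Finset.mem_erase.mpr ⟨hzy, ?_⟩
          simp only [Finset.mem_filter, Finset.mem_univ, true_and]
          rwa [hp''def, Function.update_of_ne hzy] at hz
        have h3 := Finset.card_le_card hsub
        have h4 := Finset.card_erase_of_mem hy
        omega
      have hx2 : p'' x = p' x := by
        rw [hp''def]; rw [Function.update_of_ne (Ne.symm hyx)]; exact hx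
      have h2 : Q p' x ≤ Q p'' x := ih p'' p' hp'' hp' hle2 hcard2 x hx2
      linarith
    · exact ih p p' hp hp' hle
        (by simp [Finset.not_nonempty_iff_eq_empty.mp hD]) x hx

/-- **Uniqueness under a general normalization.** Under weak substitutes, connected strict
substitutes, the balance condition `∑ z, Q z p = c = ∑ z, q z`, and a normalization map `ψ`
that is strictly increasing along coordinatewise strict increases, the system `Q p = q`
together with `ψ p = K` has at most one solution `p ∈ E`. -/
theorem uniqueness_with_normalization {Z : Type*} [Fintype Z] [DecidableEq Z]
    (L U : Z → ℝ) (E : Set (Z → ℝ))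
    (hE : ∀ p : Z → ℝ, p ∈ E ↔ ∀ z, p z ∈ Set.Ioo (L z) (U z))
    (Q : (Z → ℝ) → Z → ℝ) (c : ℝ) (q : Z → ℝ) (K : ℝ)
    (ψ : (Z → ℝ) → ℝ)
    (hcont : ContinuousOn Q E)
    (hbal : ∀ p ∈ E, ∑ z, Q p z = c)
    (hq : ∑ z, q z = c)
    -- weak substitutes: `Q x` is nondecreasing in `p x`
    (hweak_own : ∀ x : Z, ∀ p ∈ E, ∀ p' ∈ E,
      (∀ z, z ≠ x → p z = p' z) → p x ≤ p' x → Q p x ≤ Q p' x)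
    -- weak substitutes: `Q x` is nonincreasing in `p y` for `y ≠ x`
    (hweak_cross : ∀ x y : Z, y ≠ x → ∀ p ∈ E, ∀ p' ∈ E,
      (∀ z, z ≠ y → p z = p' z) → p y ≤ p' y → Q p' x ≤ Q p x)
    -- connected strict substitutes
    (hcss : ∀ X : Finset Z, X.Nonempty → X ≠ Finset.univ →
      ∀ p ∈ E, ∀ p' ∈ E, (∀ x ∈ X, p x = p' x) → (∀ y ∉ X, p y ≤ p' y) → p ≠ p' →
      ∑ x ∈ X, Q p' x < ∑ x ∈ X, Q p x)
    -- `ψ` is strictly increasing along coordinatewise strict increases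
    (hψ : ∀ p p' : Z → ℝ, (∀ z, p z < p' z) → ψ p < ψ p')
    (p p' : Z → ℝ) (hp : p ∈ E) (hp' : p' ∈ E)
    (hsol : Q p = q ∧ ψ p = K) (hsol' : Q p' = q ∧ ψ p' = K) :
    p = p' := by
  classical
  obtain ⟨hQp, hψp⟩ := hsol
  obtain ⟨hQp', hψp'⟩ := hsol'
  by_contra hne
  set S : Finset Z := Finset.univ.filter (fun z => p' z < p z) with hSdef
  set T : Finset Z := Finset.univ.filter (fun z => p z < p' z) with hTdef
  -- T = univ: p < p' everywhere, contradiction via ψ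
  by_cases hTu : T = Finset.univ
  · have hall : ∀ z, p z < p' z := by
      intro z
      have : z ∈ T := hTu ▸ Finset.mem_univ z
      simpa [hTdef] using this
    have := hψ p p' hall
    rw [hψp, hψp'] at this
    exact lt_irrefl _ this
  by_cases hSu : S = Finset.univ
  · have hall : ∀ z, p' z < p z := by
      intro z
      have : z ∈ S := hSu ▸ Finset.mem_univ z
      simpa [hSdef] using this
    have := hψ p' p hall
    rw [hψp, hψp'] at this
    exact lt_irrefl _ this
  have hSne : S.Nonempty ∨ T.Nonempty := by
    by_contra h
    push_neg at h
    obtain ⟨h1, h2⟩ := h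
    apply hne
    funext z
    have h1' : ¬ p' z < p z := fun hlt =>
      (Finset.not_nonempty_iff_eq_empty.mpr h1) ⟨z, by simp [hSdef, hlt]⟩
    have h2' : ¬ p z < p' z := fun hlt =>
      (Finset.not_nonempty_iff_eq_empty.mpr h2) ⟨z, by simp [hTdef, hlt]⟩
    linarith [not_lt.mp h1', not_lt.mp h2']
  by_cases hT : T.Nonempty
  · by_cases hS : S.Nonempty
    · -- main case: both nonempty; use pointwise max
      set m : Z → ℝ := fun z => max (p z) (p' z) with hmdef
      have hm : m ∈ E := by
        rw [hE]
        intro z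
        obtain ⟨ha, hb⟩ := (hE p).mp hp z
        obtain ⟨ha', hb'⟩ := (hE p').mp hp' z
        exact ⟨lt_max_of_lt_left ha, max_lt hb hb'⟩
      have hmT : ∀ z ∈ T, m z = p' z := by
        intro z hz
        have : p z < p' z := by simpa [hTdef] using hz
        simp [hmdef, le_of_lt this]
      have hmTc : ∀ z, z ∉ T → m z = p z := by
        intro z hz
        have : ¬ p z < p' z := by simpa [hTdef] using hz
        simp [hmdef, not_lt.mp this]
      -- strict inequality on Tᶜ via connected strict substitutes
      have hTcne : Tᶜ.Nonempty := by
        by_contra h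
        apply hTu
        rw [Finset.eq_univ_iff_forall]
        intro z
        by_contra hz
        exact h ⟨z, Finset.mem_compl.mpr hz⟩
      have hTcnu : Tᶜ ≠ Finset.univ := by
        intro h
        obtain ⟨z, hz⟩ := hT
        have : z ∈ Tᶜ := h ▸ Finset.mem_univ z
        exact Finset.mem_compl.mp this hz
      have hpm : p ≠ m := by
        intro h
        obtain ⟨z, hz⟩ := hT
        have h1 : p z < p' z := by simpa [hTdef] using hz
        have h2 : m z = p' z := hmT z hz
        rw [h] at h1; rw [h2] at h1
        exact lt_irrefl _ h1
      have hstrict : ∑ x ∈ Tᶜ, Q m x < ∑ x ∈ Tᶜ, Q p x := by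
        refine hcss Tᶜ hTcne hTcnu p hp m hm ?_ ?_ hpm
        · intro x hx
          exact (hmTc x (Finset.mem_compl.mp hx)).symm
        · intro y hy
          have hyT : y ∈ T := by
            by_contra h
            exact hy (Finset.mem_compl.mpr h)
          rw [hmT y hyT]
          exact le_of_lt (by simpa [hTdef] using hyT)
      -- weak inequality on T via iterated cross-monotonicity (from p')
      have hweakT : ∀ z ∈ T, Q m z ≤ Q p' z := by
        intro z hz
        refine cross_mono_aux L U E hE Q hweak_cross (Fintype.card Z) p' m hp' hm
          (fun w => le_max_right _ _) ?_ z (hmT z hz).symm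
        calc (Finset.univ.filter (fun w => p' w < m w)).card
            ≤ Finset.univ.card := Finset.card_le_card (Finset.filter_subset _ _)
          _ = Fintype.card Z := Finset.card_univ
      have hsumT : ∑ z ∈ T, Q m z ≤ ∑ z ∈ T, Q p' z := Finset.sum_le_sum hweakT
      have hbalm : ∑ z, Q m z = c := hbal m hm
      have hsplit : ∑ z ∈ T, Q m z + ∑ z ∈ Tᶜ, Q m z = ∑ z, Q m z :=
        Finset.sum_add_sum_compl T _
      have hsplitp : ∑ z ∈ T, Q p' z + ∑ z ∈ Tᶜ, Q p z = c := by
        have e1 : ∑ z ∈ T, Q p' z = ∑ z ∈ T, q z := by rw [hQp']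
        have e2 : ∑ z ∈ Tᶜ, Q p z = ∑ z ∈ Tᶜ, q z := by rw [hQp]
        rw [e1, e2, Finset.sum_add_sum_compl, hq]
      linarith
    · -- S empty: p ≤ p' everywhere, strict somewhere (T nonempty)
      have hle : ∀ z, p z ≤ p' z := by
        intro z
        by_contra h
        push_neg at h
        exact hS ⟨z, by simp [hSdef, h]⟩
      have hTcne : Tᶜ.Nonempty := by
        by_contra h
        apply hTu
        rw [Finset.eq_univ_iff_forall]
        intro z
        by_contra hz
        exact h ⟨z, Finset.mem_compl.mpr hz⟩
      have hTcnu : Tᶜ ≠ Finset.univ := by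
        intro h
        obtain ⟨z, hz⟩ := hT
        exact Finset.mem_compl.mp (h ▸ Finset.mem_univ z) hz
      have hstrict : ∑ x ∈ Tᶜ, Q p' x < ∑ x ∈ Tᶜ, Q p x := by
        refine hcss Tᶜ hTcne hTcnu p hp p' hp' ?_ ?_ hne
        · intro x hx
          have : ¬ p x < p' x := by simpa [hTdef] using Finset.mem_compl.mp hx
          linarith [hle x, not_lt.mp this]
        · intro y _; exact hle y
      rw [hQp, hQp'] at hstrict
      exact lt_irrefl _ hstrict
  · -- T empty: p' ≤ p everywhere, strict somewhere (S nonempty)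
    have hS : S.Nonempty := by
      rcases hSne with h | h
      · exact h
      · exact absurd h hT
    have hle : ∀ z, p' z ≤ p z := by
      intro z
      by_contra h
      push_neg at h
      exact hT ⟨z, by simp [hTdef, h]⟩
    have hScne : Sᶜ.Nonempty := by
      by_contra h
      apply hSu
      rw [Finset.eq_univ_iff_forall]
      intro z
      by_contra hz
      exact h ⟨z, Finset.mem_compl.mpr hz⟩
    have hScnu : Sᶜ ≠ Finset.univ := by
      intro h
      obtain ⟨z, hz⟩ := hS
      exact Finset.mem_compl.mp (h ▸ Finset.mem_univ z) hz
    have hstrict : ∑ x ∈ Sᶜ, Q p x < ∑ x ∈ Sᶜ, Q p' x := by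
      refine hcss Sᶜ hScne hScnu p' hp' p hp ?_ ?_ (Ne.symm hne)
      · intro x hx
        have : ¬ p' x < p x := by simpa [hSdef] using Finset.mem_compl.mp hx
        linarith [hle x, not_lt.mp this]
      · intro y _; exact hle y
    rw [hQp, hQp'] at hstrict
    exact lt_irrefl _ hstrict
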